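/- arXiv:2010.04600 — 2 statements merged into one kernel-verified Lean document; each statement's English description precedes it below -/
import Mathlib

section
/- Let x̃ solve ẋ̃(t) = -a x̃(t) + σ̂(t) - σ(t) on [iT, (i+1)T], where a > 0, σ is continuous, and σ̂ is piecewise constant given on [iT,(i+1)T) by σ̂(t) = -(a/(e^{aT}-1)) x̃(iT). Then x̃((i+1)T) = -∫_{iT}^{(i+1)T} e^{-a((i+1)T - ξ)} σ(ξ) dξ. -/
/-- With the piecewise-constant adaptive law, the prediction error at the next
sampling instant equals minus the weighted integral of the uncertainty. -/
theorem stmt_6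
    {n : ℕ} (a T : ℝ) (i : ℕ) (ha : 0 < a) (hT : 0 < T)
    (xtil : ℝ → EuclideanSpace ℝ (Fin n))
    (σ : ℝ → EuclideanSpace ℝ (Fin n))
    (hσ : Continuous σ)
    -- ẋ̃(t) = -a x̃(t) + σ̂(t) - σ(t), with σ̂ ≡ -(a/(e^{aT}-1)) x̃(iT) on the interval
    (hode : ∀ t ∈ Set.Icc ((i : ℝ) * T) (((i : ℝ) + 1) * T),
      HasDerivAt xtil
        ((-a) • xtil t + (-(a / (Real.exp (a * T) - 1))) • xtil ((i : ℝ) * T) - σ t) t) :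
    xtil (((i : ℝ) + 1) * T) =
      -∫ ξ in ((i : ℝ) * T)..(((i : ℝ) + 1) * T),
        Real.exp (-a * (((i : ℝ) + 1) * T - ξ)) • σ ξ := by
  set t0 : ℝ := (i : ℝ) * T with ht0
  set t1 : ℝ := ((i : ℝ) + 1) * T with ht1
  have htle : t0 ≤ t1 := by nlinarith
  set c : EuclideanSpace ℝ (Fin n) := (-(a / (Real.exp (a * T) - 1))) • xtil t0 with hc
  have hE1 : (1 : ℝ) < Real.exp (a * T) := by
    rw [← Real.exp_zero]; exact Real.exp_lt_exp.mpr (by positivity)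
  have hEne : Real.exp (a * T) - 1 ≠ 0 := by linarith
  -- derivative of exp(a t) • xtil t
  have hF : ∀ t ∈ Set.uIcc t0 t1,
      HasDerivAt (fun t => Real.exp (a * t) • xtil t)
        (Real.exp (a * t) • (c - σ t)) t := by
    intro t ht
    rw [Set.uIcc_of_le htle] at ht
    have hexp : HasDerivAt (fun t => Real.exp (a * t)) (Real.exp (a * t) * a) t := by
      simpa using ((hasDerivAt_id t).const_mul a).exp
    have := hexp.smul (hode t ht)
    refine this.congr_deriv ?_
    rw [mul_smul]
    module
  have hcont : Continuous fun t => Real.exp (a * t) • (c - σ t) :=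
    (Real.continuous_exp.comp (continuous_const.mul continuous_id)).smul
      (continuous_const.sub hσ)
  have key := intervalIntegral.integral_eq_sub_of_hasDerivAt hF
    (hcont.intervalIntegrable t0 t1)
  -- split the integral
  have hint1 : IntervalIntegrable (fun t => Real.exp (a * t) • c) MeasureTheory.volume t0 t1 :=
    ((Real.continuous_exp.comp (continuous_const.mul continuous_id)).smul
      continuous_const).intervalIntegrable t0 t1
  have hint2 : IntervalIntegrable (fun t => Real.exp (a * t) • σ t) MeasureTheory.volume t0 t1 :=
    ((Real.continuous_exp.comp (continuous_const.mul continuous_id)).smul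
      hσ).intervalIntegrable t0 t1
  have hsplit : (∫ t in t0..t1, Real.exp (a * t) • (c - σ t))
      = (∫ t in t0..t1, Real.exp (a * t) • c) - ∫ t in t0..t1, Real.exp (a * t) • σ t := by
    rw [← intervalIntegral.integral_sub hint1 hint2]
    congr 1; ext t; rw [smul_sub]
  -- first integral
  have hI1 : (∫ t in t0..t1, Real.exp (a * t) • c)
      = ((Real.exp (a * t1) - Real.exp (a * t0)) / a) • c := by
    rw [intervalIntegral.integral_smul_const]
    congr 1
    have h : ∀ t ∈ Set.uIcc t0 t1, HasDerivAt (fun t => Real.exp (a * t) / a)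
        (Real.exp (a * t)) t := by
      intro t _
      have hexp : HasDerivAt (fun t => Real.exp (a * t)) (Real.exp (a * t) * a) t := by
        simpa using ((hasDerivAt_id t).const_mul a).exp
      have := hexp.div_const a
      simpa [mul_div_assoc, mul_div_cancel_right₀ _ ha.ne'] using this
    have := intervalIntegral.integral_eq_sub_of_hasDerivAt h
      ((Real.continuous_exp.comp (continuous_const.mul continuous_id)).intervalIntegrable t0 t1)
    rw [this]; ring
  -- coefficient cancellation
  have hcoef : ((Real.exp (a * t1) - Real.exp (a * t0)) / a) • c
      = -(Real.exp (a * t0) • xtil t0) := by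
    have h1 : a * t1 = a * t0 + a * T := by rw [ht0, ht1]; ring
    have hs : (Real.exp (a * t1) - Real.exp (a * t0)) / a * (-(a / (Real.exp (a * T) - 1)))
        = -Real.exp (a * t0) := by
      rw [h1, Real.exp_add]; field_simp
    rw [hc, smul_smul, hs, neg_smul]
  set Iσ := ∫ t in t0..t1, Real.exp (a * t) • σ t with hIσ
  have hkey2 : Real.exp (a * t1) • xtil t1 = -Iσ := by
    have := key
    rw [hsplit, hI1, hcoef] at this
    linear_combination (norm := module) this.symm
  -- rewrite RHS
  have hRHS : (∫ ξ in t0..t1, Real.exp (-a * (t1 - ξ)) • σ ξ)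
      = Real.exp (-(a * t1)) • Iσ := by
    rw [hIσ, ← intervalIntegral.integral_smul]
    congr 1; ext ξ
    rw [smul_smul, ← Real.exp_add]
    ring_nf
  have hx1 : xtil t1 = Real.exp (-(a * t1)) • (-Iσ) := by
    rw [← hkey2, smul_smul, ← Real.exp_add]
    simp
  rw [hx1, hRHS, smul_neg]
end

section
/- Sampled-data estimation error bound: under the hypotheses that (a) the true lumped uncertainty σ(t) satisfies ‖σ(t)‖ ≤ b_σ and ‖σ(t)-σ(s)‖ ≤ L_σ|t-s| on [0,τ], and (b) the piecewise-constant estimate satisfies σ̂(t) = e^{-aT}(σ₁(τ₁*),…,σₙ(τₙ*))ᵀ for t ∈ [(i+1)T,(i+2)T) with τⱼ* ∈ (iT,(i+1)T), and σ̂_c(t) = 0 on [0,T), σ̂_c(t) = σ̂(t) on [T,τ], then the error σ̃ = σ̂_c - σ satisfies: ‖σ̃(t)‖ ≤ b_σ for t ∈ [0,T), and ‖σ̃(t)‖ ≤ 2√n T L_σ + (1-e^{-aT})√n b_σ for t ∈ [T,τ]. In particular the bound on [T,τ] tends to 0 as T → 0. -/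
/-- View a plain vector as an element of Euclidean space (2-norm). -/
def toE {n : ℕ} (v : Fin n → ℝ) : EuclideanSpace ℝ (Fin n) := WithLp.toLp 2 v

lemma abs_apply_le_norm' {n : ℕ} (x : EuclideanSpace ℝ (Fin n)) (j : Fin n) :
    |x j| ≤ ‖x‖ := by
  rw [EuclideanSpace.norm_eq]
  calc |x j| = Real.sqrt ((x j)^2) := (Real.sqrt_sq_eq_abs _).symm
    _ ≤ Real.sqrt (∑ i, ‖x i‖^2) := by
        apply Real.sqrt_le_sqrt
        have := Finset.single_le_sum (f := fun i => ‖x i‖^2)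
          (fun i _ => sq_nonneg _) (Finset.mem_univ j)
        simpa [Real.norm_eq_abs, sq_abs] using this

lemma norm_le_sqrt_mul' {n : ℕ} (x : EuclideanSpace ℝ (Fin n)) (c : ℝ) (hc : 0 ≤ c)
    (h : ∀ j, |x j| ≤ c) : ‖x‖ ≤ Real.sqrt n * c := by
  rw [EuclideanSpace.norm_eq]
  calc Real.sqrt (∑ i, ‖x i‖^2) ≤ Real.sqrt (n * c^2) := by
        apply Real.sqrt_le_sqrt
        have : ∀ i ∈ Finset.univ, ‖x i‖^2 ≤ c^2 := by
          intro i _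
          rw [Real.norm_eq_abs]
          exact pow_le_pow_left₀ (abs_nonneg _) (h i) 2
        calc (∑ i, ‖x i‖^2) ≤ (Finset.univ : Finset (Fin n)).card • c^2 :=
              Finset.sum_le_card_nsmul _ _ _ this
          _ = n * c^2 := by simp [nsmul_eq_mul]
    _ = Real.sqrt n * c := by
        rw [Real.sqrt_mul (by positivity), Real.sqrt_sq hc]

/-- Sampled-data estimation error bound: the piecewise-constant estimate built
from component-wise mean-value points yields an error bounded by `b_σ` on the
first sampling interval and by `2√n T L_σ + (1-e^{-aT})√n b_σ` afterwards; the
latter bound tends to `0` as `T → 0⁺`. -/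
theorem stmt_19
    {n : ℕ} (a T τ Lσ bσ : ℝ) (ha : 0 < a) (hT : 0 < T) (hTτ : T ≤ τ)
    (σ σhat σhatc : ℝ → EuclideanSpace ℝ (Fin n))
    -- (a) boundedness and Lipschitz continuity of the lumped uncertainty on [0,τ]
    (hb : ∀ t ∈ Set.Icc (0:ℝ) τ, ‖σ t‖ ≤ bσ)
    (hLip : ∀ t ∈ Set.Icc (0:ℝ) τ, ∀ s ∈ Set.Icc (0:ℝ) τ,
      ‖σ t - σ s‖ ≤ Lσ * |t - s|)
    -- (b) mean-value representation of the piecewise-constant estimate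
    (hrep : ∀ i : ℕ, ∀ t ∈ Set.Ico (((i : ℝ) + 1) * T) (((i : ℝ) + 2) * T),
      ∃ τstar : Fin n → ℝ,
        (∀ j, τstar j ∈ Set.Ioo ((i : ℝ) * T) (((i : ℝ) + 1) * T)) ∧
        σhat t = Real.exp (-a * T) • toE (fun j => σ (τstar j) j))
    -- σ̂_c vanishes on [0,T) and equals σ̂ on [T,τ]
    (hc1 : ∀ t ∈ Set.Ico (0:ℝ) T, σhatc t = 0)
    (hc2 : ∀ t ∈ Set.Icc T τ, σhatc t = σhat t) :
    (∀ t ∈ Set.Ico (0:ℝ) T, ‖σhatc t - σ t‖ ≤ bσ) ∧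
    (∀ t ∈ Set.Icc T τ,
      ‖σhatc t - σ t‖ ≤ 2 * Real.sqrt n * T * Lσ +
        (1 - Real.exp (-a * T)) * Real.sqrt n * bσ) ∧
    Filter.Tendsto
      (fun T' : ℝ => 2 * Real.sqrt n * T' * Lσ + (1 - Real.exp (-a * T')) * Real.sqrt n * bσ)
      (nhdsWithin 0 (Set.Ioi 0)) (nhds 0) := by
  have hbσ : 0 ≤ bσ := le_trans (norm_nonneg _) (hb 0 ⟨le_refl _, by linarith⟩)
  have hLσ : 0 ≤ Lσ := by
    have h1 := hLip 0 ⟨le_refl _, by linarith⟩ T ⟨hT.le, hTτ⟩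
    have h2 : |(0:ℝ) - T| = T := by rw [abs_sub_comm]; simpa using abs_of_pos hT
    nlinarith [norm_nonneg (σ 0 - σ T)]
  have hexp1 : Real.exp (-a * T) ≤ 1 := by
    rw [Real.exp_le_one_iff]; nlinarith
  have hexp0 : 0 < Real.exp (-a * T) := Real.exp_pos _
  refine ⟨?_, ?_, ?_⟩
  · intro t ht
    rw [hc1 t ht, zero_sub, norm_neg]
    exact hb t ⟨ht.1, le_trans ht.2.le hTτ⟩
  · intro t ht
    -- n = 0 case: everything is zero
    rcases Nat.eq_zero_or_pos n with hn | hn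
    · subst hn
      have : σhatc t - σ t = 0 := Subsingleton.elim _ _
      rw [this, norm_zero]
      simp
    have hsqrt1 : (1:ℝ) ≤ Real.sqrt n := by
      rw [show (1:ℝ) = Real.sqrt 1 by simp]
      exact Real.sqrt_le_sqrt (by exact_mod_cast hn)
    -- locate the sampling interval
    set k := ⌊t / T⌋₊ with hk
    have htτ : t ∈ Set.Icc (0:ℝ) τ := ⟨by linarith [ht.1], ht.2⟩
    have hk1 : 1 ≤ k := Nat.le_floor (by rw [le_div_iff₀ hT]; push_cast; linarith [ht.1])
    have hkle : (k : ℝ) * T ≤ t := by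
      have h0 : (0:ℝ) ≤ t / T := div_nonneg (by linarith [ht.1]) hT.le
      have := Nat.floor_le h0
      calc (k:ℝ) * T ≤ (t/T) * T := by nlinarith
        _ = t := by field_simp
    have hklt : t < ((k : ℝ) + 1) * T := by
      have := Nat.lt_floor_add_one (t / T)
      calc t = (t/T) * T := by field_simp
        _ < ((k:ℝ)+1) * T := by nlinarith
    set i := k - 1 with hi
    have hik : (i : ℝ) + 1 = k := by
      have : i + 1 = k := Nat.succ_pred_eq_of_pos hk1
      exact_mod_cast this
    have htmem : t ∈ Set.Ico (((i : ℝ) + 1) * T) (((i : ℝ) + 2) * T) := by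
      constructor
      · rw [hik]; exact hkle
      · have : (i : ℝ) + 2 = (k:ℝ) + 1 := by linarith [hik]
        rw [this]; exact hklt
    obtain ⟨τs, hτs, hhat⟩ := hrep i t htmem
    rw [hc2 t ht, hhat]
    set c := Real.exp (-a * T) with hc
    set v := toE (fun j => σ (τs j) j) with hv
    -- τstar bounds
    have hτmem : ∀ j, τs j ∈ Set.Icc (0:ℝ) τ := by
      intro j
      obtain ⟨h1, h2⟩ := hτs j
      constructor
      · have : (0:ℝ) ≤ (i:ℝ) * T := by positivity
        linarith
      · have : ((i:ℝ)+1) * T ≤ t := htmem.1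
        linarith [ht.2]
    have hdist : ∀ j, |τs j - t| ≤ 2 * T := by
      intro j
      obtain ⟨h1, h2⟩ := hτs j
      rw [abs_le]
      constructor
      · have := htmem.2; nlinarith
      · have := htmem.1; nlinarith
    -- componentwise bound on v - σ t
    have hcomp : ∀ j, |(v - σ t) j| ≤ Lσ * (2 * T) := by
      intro j
      have h1 : |(v - σ t) j| = |(σ (τs j) - σ t) j| := by
        simp [hv, toE, PiLp.sub_apply]
      rw [h1]
      calc |(σ (τs j) - σ t) j| ≤ ‖σ (τs j) - σ t‖ := abs_apply_le_norm' _ j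
        _ ≤ Lσ * |τs j - t| := hLip _ (hτmem j) t htτ
        _ ≤ Lσ * (2 * T) := by nlinarith [hdist j]
    have hvnorm : ‖v - σ t‖ ≤ Real.sqrt n * (Lσ * (2 * T)) :=
      norm_le_sqrt_mul' _ _ (by positivity) hcomp
    have hsplit : c • v - σ t = c • (v - σ t) + (c - 1) • σ t := by
      simp [smul_sub, sub_smul]
    rw [hsplit]
    calc ‖c • (v - σ t) + (c - 1) • σ t‖
        ≤ ‖c • (v - σ t)‖ + ‖(c - 1) • σ t‖ := norm_add_le _ _
      _ = c * ‖v - σ t‖ + (1 - c) * ‖σ t‖ := by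
          rw [norm_smul, norm_smul, Real.norm_eq_abs, Real.norm_eq_abs,
            abs_of_pos hexp0, abs_of_nonpos (by linarith : c - 1 ≤ 0)]
          ring
      _ ≤ 2 * Real.sqrt n * T * Lσ + (1 - Real.exp (-a * T)) * Real.sqrt n * bσ := by
          have h1 : c * ‖v - σ t‖ ≤ 2 * Real.sqrt n * T * Lσ := by
            have := mul_le_mul_of_nonneg_left hvnorm hexp0.le
            nlinarith [norm_nonneg (v - σ t), Real.sqrt_nonneg (n:ℝ)]
          have h2 : (1 - c) * ‖σ t‖ ≤ (1 - Real.exp (-a * T)) * Real.sqrt n * bσ := by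
            have hbt := hb t htτ
            have h3 : (1 - c) * ‖σ t‖ ≤ (1 - c) * bσ :=
              mul_le_mul_of_nonneg_left hbt (by linarith)
            have h4 : (1 - c) * bσ ≤ (1 - c) * (Real.sqrt n * bσ) := by
              apply mul_le_mul_of_nonneg_left _ (by linarith)
              nlinarith
            rw [hc] at h3 h4 ⊢
            linarith
          linarith
  · have hcont : Continuous fun T' : ℝ =>
        2 * Real.sqrt n * T' * Lσ + (1 - Real.exp (-a * T')) * Real.sqrt n * bσ := by
      fun_prop
    refine Filter.Tendsto.mono_left ?_ nhdsWithin_le_nhds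
    have := hcont.tendsto 0
    simpa using this
end
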